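/- Let n ≥ 3 be odd. The number of small tours in ℤ/nℤ equals the number of odd tours in ℤ/nℤ, and both equal (1/4)·C(n+1,3). -/

import Mathlib

/-- Cyclic rotation of an ordered triple. -/
def rotTriple {α : Type*} (t : α × α × α) : α × α × α := (t.2.1, t.2.2, t.1)

/-- Tours: length-3 necklaces (ordered triples up to cyclic rotation) of elements of `ℤ/nℤ`. -/
def Tour (n : ℕ) : Type :=
  Quot (fun a b : ZMod n × ZMod n × ZMod n => b = rotTriple a)

/-- A triple is a small tour representative: its entries are distinct and its three
steps have representatives in `{1,...,(n-1)/2}`. -/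
def isSmallTriple (n : ℕ) (t : ZMod n × ZMod n × ZMod n) : Prop :=
  t.1 ≠ t.2.1 ∧ t.2.1 ≠ t.2.2 ∧ t.2.2 ≠ t.1 ∧
  (t.2.1 - t.1).val ≤ (n - 1) / 2 ∧ (t.2.2 - t.2.1).val ≤ (n - 1) / 2 ∧
  (t.1 - t.2.2).val ≤ (n - 1) / 2

/-- A triple is an odd tour representative: its entries are distinct and its three
steps have odd representatives in `[1..n-1]`. -/
def isOddTriple (n : ℕ) (t : ZMod n × ZMod n × ZMod n) : Prop :=
  t.1 ≠ t.2.1 ∧ t.2.1 ≠ t.2.2 ∧ t.2.2 ≠ t.1 ∧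
  Odd (t.2.1 - t.1).val ∧ Odd (t.2.2 - t.2.1).val ∧ Odd (t.1 - t.2.2).val

/-- The set of small tours. -/
def SmallTours (n : ℕ) : Set (Tour n) :=
  {T | ∃ a, isSmallTriple n a ∧ Quot.mk _ a = T}

/-- The set of odd tours. -/
def OddTours (n : ℕ) : Set (Tour n) :=
  {T | ∃ a, isOddTriple n a ∧ Quot.mk _ a = T}

namespace StmtAux

open Finset

abbrev Trip (n : ℕ) := ZMod n × ZMod n × ZMod n

variable {n : ℕ}

lemma rot3 {α : Type*} (t : α × α × α) : rotTriple (rotTriple (rotTriple t)) = t := rfl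

def Rrot (a b : Trip n) : Prop := b = a ∨ b = rotTriple a ∨ b = rotTriple (rotTriple a)

lemma rrot_symm {a b : Trip n} (h : Rrot a b) : Rrot b a := by
  rcases h with h | h | h <;> subst h
  · exact Or.inl rfl
  · exact Or.inr (Or.inr (rot3 a).symm)
  · exact Or.inr (Or.inl (rot3 a).symm)

lemma rrot_trans {a b c : Trip n} (h1 : Rrot a b) (h2 : Rrot b c) : Rrot a c := by
  rcases h2 with h | h | h <;> rcases h1 with g | g | g <;> subst h <;> subst g <;>
    simp [Rrot, rot3]

lemma quot_eq_iff (a b : Trip n) :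
    (Quot.mk (fun a b : Trip n => b = rotTriple a) a = Quot.mk _ b) ↔ Rrot a b := by
  rw [Quot.eq]
  constructor
  · intro h
    induction h with
    | rel x y h => exact Or.inr (Or.inl h)
    | refl x => exact Or.inl rfl
    | symm x y _ ih => exact rrot_symm ih
    | trans x y z _ _ ih1 ih2 => exact rrot_trans ih1 ih2
  · intro h
    rcases h with h | h | h
    · rw [h]; exact Relation.EqvGen.refl a
    · exact Relation.EqvGen.rel _ _ h
    · exact Relation.EqvGen.trans _ _ _ (Relation.EqvGen.rel _ _ rfl)
        (Relation.EqvGen.rel _ _ h)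


lemma quot_mk_rot (a : Trip n) :
    (Quot.mk (fun a b : Trip n => b = rotTriple a) (rotTriple a)) = Quot.mk _ a :=
  (Quot.sound (r := fun a b : Trip n => b = rotTriple a) rfl).symm

lemma quot_mk_iter (k : ℕ) (a : Trip n) :
    (Quot.mk (fun a b : Trip n => b = rotTriple a) (rotTriple^[k] a)) = Quot.mk _ a := by
  induction k with
  | zero => rfl
  | succ j ih => rw [Function.iterate_succ_apply', quot_mk_rot, ih]

lemma iter_inj (t : Trip n) (h1 : t.1 ≠ t.2.1) (h2 : t.2.1 ≠ t.2.2)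
    {k k' : ℕ} (hk : k < 3) (hk' : k' < 3)
    (h : rotTriple^[k] t = rotTriple^[k'] t) : k = k' := by
  obtain ⟨a, b, c⟩ := t
  simp only at h1 h2
  interval_cases k <;> interval_cases k' <;>
    simp only [Function.iterate_succ, Function.iterate_zero, Function.comp_apply,
      id_eq, rotTriple, Prod.mk.injEq] at h <;>
    first
      | rfl
      | (exfalso; obtain ⟨e1, e2, e3⟩ := h; grind)

lemma card_triples (P : Trip n → Prop)
    (hrot : ∀ t, P t → P (rotTriple t))
    (hne : ∀ t, P t → t.1 ≠ t.2.1) :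
    Nat.card {t : Trip n // P t} =
      3 * Nat.card {T : Tour n // ∃ a, P a ∧ Quot.mk _ a = T} := by
  classical
  set S := {T : Tour n // ∃ a, P a ∧ Quot.mk _ a = T} with hS
  have hPiter : ∀ (k : ℕ) (t : Trip n), P t → P (rotTriple^[k] t) := by
    intro k t ht
    induction k with
    | zero => exact ht
    | succ j ih => rw [Function.iterate_succ_apply']; exact hrot _ ih
  let rep : S → Trip n := fun T => Classical.choose T.2
  have hrep : ∀ T : S, P (rep T) ∧ Quot.mk _ (rep T) = T.1 :=
    fun T => Classical.choose_spec T.2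
  let f : Fin 3 × S → {t : Trip n // P t} :=
    fun p => ⟨rotTriple^[p.1.val] (rep p.2), hPiter _ _ (hrep p.2).1⟩
  have hinj : Function.Injective f := by
    rintro ⟨k, T⟩ ⟨k', T'⟩ h
    have hv : rotTriple^[k.val] (rep T) = rotTriple^[k'.val] (rep T') :=
      congrArg Subtype.val h
    have hTT : T = T' := by
      apply Subtype.ext
      rw [← (hrep T).2, ← (hrep T').2, ← quot_mk_iter k.val (rep T),
        ← quot_mk_iter k'.val (rep T')]
      exact congrArg (Quot.mk _) hv
    subst hTT
    have hk : k = k' := by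
      apply Fin.ext
      refine iter_inj (rep T) (hne _ (hrep T).1) ?_ k.isLt k'.isLt hv
      have := hne _ (hrot _ (hrep T).1)
      exact this
    rw [hk]
  have hsurj : Function.Surjective f := by
    rintro ⟨t, ht⟩
    set T : S := ⟨Quot.mk _ t, ⟨t, ht, rfl⟩⟩ with hT
    have heq : Quot.mk (fun a b : Trip n => b = rotTriple a) (rep T) = Quot.mk _ t :=
      (hrep T).2
    have hR : Rrot (rep T) t := (quot_eq_iff (rep T) t).mp heq
    rcases hR with h | h | h
    · exact ⟨(⟨0, by omega⟩, T), Subtype.ext h.symm⟩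
    · refine ⟨(⟨1, by omega⟩, T), Subtype.ext ?_⟩
      show rotTriple^[1] (rep T) = t
      exact h.symm
    · refine ⟨(⟨2, by omega⟩, T), Subtype.ext ?_⟩
      show rotTriple^[2] (rep T) = t
      exact h.symm
  have e : (Fin 3 × S) ≃ {t : Trip n // P t} := Equiv.ofBijective f ⟨hinj, hsurj⟩
  rw [← Nat.card_congr e, Nat.card_prod, Nat.card_eq_fintype_card, Fintype.card_fin]

def stepEquiv (Q : ZMod n × ZMod n → Prop) :
    {t : Trip n // Q (t.2.1 - t.1, t.2.2 - t.2.1)} ≃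
      ZMod n × {s : ZMod n × ZMod n // Q s} where
  toFun t := (t.1.1, ⟨(t.1.2.1 - t.1.1, t.1.2.2 - t.1.2.1), t.2⟩)
  invFun p := ⟨(p.1, p.1 + p.2.1.1, p.1 + p.2.1.1 + p.2.1.2), by
    have h := p.2.2
    simpa using h⟩
  left_inv := by
    rintro ⟨⟨a, b, c⟩, h⟩
    apply Subtype.ext
    simp [Prod.ext_iff]
  right_inv := by
    rintro ⟨a, ⟨⟨x, y⟩, h⟩⟩
    simp [Prod.ext_iff]

def QS (n m : ℕ) (s : ZMod n × ZMod n) : Prop :=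
  s.1 ≠ 0 ∧ s.2 ≠ 0 ∧ s.1 + s.2 ≠ 0 ∧
    s.1.val ≤ m ∧ s.2.val ≤ m ∧ (-(s.1 + s.2)).val ≤ m

def QO (n : ℕ) (s : ZMod n × ZMod n) : Prop :=
  s.1 ≠ 0 ∧ s.2 ≠ 0 ∧ s.1 + s.2 ≠ 0 ∧
    Odd s.1.val ∧ Odd s.2.val ∧ Odd ((-(s.1 + s.2)).val)

lemma small_iff (t : Trip n) :
    isSmallTriple n t ↔ QS n ((n - 1) / 2) (t.2.1 - t.1, t.2.2 - t.2.1) := by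
  have hxy : (t.2.1 - t.1) + (t.2.2 - t.2.1) = t.2.2 - t.1 := by ring
  have hng : -(t.2.2 - t.1) = t.1 - t.2.2 := by ring
  simp only [isSmallTriple, QS, hxy, hng, sub_ne_zero]
  constructor
  · rintro ⟨h1, h2, h3, h4, h5, h6⟩
    exact ⟨h1.symm, h2.symm, h3, h4, h5, h6⟩
  · rintro ⟨h1, h2, h3, h4, h5, h6⟩
    exact ⟨h1.symm, h2.symm, h3, h4, h5, h6⟩

lemma odd_iff' (t : Trip n) :
    isOddTriple n t ↔ QO n (t.2.1 - t.1, t.2.2 - t.2.1) := by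
  have hxy : (t.2.1 - t.1) + (t.2.2 - t.2.1) = t.2.2 - t.1 := by ring
  have hng : -(t.2.2 - t.1) = t.1 - t.2.2 := by ring
  simp only [isOddTriple, QO, hxy, hng, sub_ne_zero]
  constructor
  · rintro ⟨h1, h2, h3, h4, h5, h6⟩
    exact ⟨h1.symm, h2.symm, h3, h4, h5, h6⟩
  · rintro ⟨h1, h2, h3, h4, h5, h6⟩
    exact ⟨h1.symm, h2.symm, h3, h4, h5, h6⟩

lemma QS_char {m : ℕ} [NeZero n] (hm : n = 2 * m + 1) (s : ZMod n × ZMod n) :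
    QS n m s ↔ 1 ≤ s.1.val ∧ s.1.val ≤ m ∧ 1 ≤ s.2.val ∧ s.2.val ≤ m ∧
      m + 1 ≤ s.1.val + s.2.val := by
  constructor
  · rintro ⟨h1, h2, h3, h4, h5, h6⟩
    have hp : s.1.val ≠ 0 := fun h => h1 ((ZMod.val_eq_zero s.1).mp h)
    have hq : s.2.val ≠ 0 := fun h => h2 ((ZMod.val_eq_zero s.2).mp h)
    have hlt : s.1.val + s.2.val < n := by omega
    have hv : (s.1 + s.2).val = s.1.val + s.2.val := ZMod.val_add_of_lt hlt
    rw [ZMod.neg_val, if_neg h3, hv] at h6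
    exact ⟨by omega, h4, by omega, h5, by omega⟩
  · rintro ⟨h1, h2, h3, h4, h5⟩
    have hlt : s.1.val + s.2.val < n := by omega
    have hv : (s.1 + s.2).val = s.1.val + s.2.val := ZMod.val_add_of_lt hlt
    have hs1 : s.1 ≠ 0 := fun h => by rw [h] at h1; simp at h1
    have hs2 : s.2 ≠ 0 := fun h => by rw [h] at h3; simp at h3
    have hsum : s.1 + s.2 ≠ 0 := fun h => by
      rw [h, ZMod.val_zero] at hv; omega
    refine ⟨hs1, hs2, hsum, h2, h4, ?_⟩
    rw [ZMod.neg_val, if_neg hsum, hv]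
    omega

lemma QO_char {m : ℕ} [NeZero n] (hm : n = 2 * m + 1) (s : ZMod n × ZMod n) :
    QO n s ↔ Odd s.1.val ∧ Odd s.2.val ∧ s.1.val + s.2.val < n := by
  have hp : s.1.val < n := ZMod.val_lt s.1
  have hq : s.2.val < n := ZMod.val_lt s.2
  constructor
  · rintro ⟨h1, h2, h3, h4, h5, h6⟩
    refine ⟨h4, h5, ?_⟩
    by_contra hge
    push_neg at hge
    have hgt : n < s.1.val + s.2.val := by
      rcases Nat.lt_or_ge n (s.1.val + s.2.val) with h | h
      · exact h
      · exfalso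
        have : s.1.val + s.2.val = n := le_antisymm (by omega) hge
        rw [Nat.odd_iff] at h4 h5
        have hno : n % 2 = 1 := by omega
        omega
    have hmod : (s.1.val + s.2.val) % n = s.1.val + s.2.val - n := by
      rw [Nat.mod_eq_sub_mod (by omega), Nat.mod_eq_of_lt (by omega)]
    have hv : (s.1 + s.2).val = s.1.val + s.2.val - n := by
      rw [ZMod.val_add, hmod]
    rw [ZMod.neg_val, if_neg h3, hv, Nat.odd_iff] at h6
    rw [Nat.odd_iff] at h4 h5
    omega
  · rintro ⟨h1, h2, h3⟩
    have hp1 : s.1.val ≠ 0 := by rcases h1 with ⟨k, hk⟩; omega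
    have hq1 : s.2.val ≠ 0 := by rcases h2 with ⟨k, hk⟩; omega
    have hv : (s.1 + s.2).val = s.1.val + s.2.val := ZMod.val_add_of_lt h3
    have hs1 : s.1 ≠ 0 := fun h => hp1 (by rw [h, ZMod.val_zero])
    have hs2 : s.2 ≠ 0 := fun h => hq1 (by rw [h, ZMod.val_zero])
    have hsum : s.1 + s.2 ≠ 0 := fun h => by
      rw [h, ZMod.val_zero] at hv; omega
    refine ⟨hs1, hs2, hsum, h1, h2, ?_⟩
    rw [ZMod.neg_val, if_neg hsum, hv, Nat.odd_iff]
    rw [Nat.odd_iff] at h1 h2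
    have hno : n % 2 = 1 := by omega
    omega

def filterA (m : ℕ) : Finset (ℕ × ℕ) :=
  ((Icc 1 m) ×ˢ (Icc 1 m)).filter fun p => m + 1 ≤ p.1 + p.2

def filterB (n : ℕ) : Finset (ℕ × ℕ) :=
  ((range n) ×ˢ (range n)).filter fun p => p.1 % 2 = 1 ∧ p.2 % 2 = 1 ∧ p.1 + p.2 < n

def sigT (m : ℕ) : Finset ((_ : ℕ) × ℕ) := (range m).sigma fun a => range (m - a)

lemma card_QS {m : ℕ} [NeZero n] (hm : n = 2 * m + 1) :
    Nat.card {s : ZMod n × ZMod n // QS n m s} = (filterA m).card := by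
  have e : {s : ZMod n × ZMod n // QS n m s} ≃ {p : ℕ × ℕ // p ∈ filterA m} :=
    { toFun := fun s => ⟨(s.1.1.val, s.1.2.val), by
        have h := (QS_char hm s.1).mp s.2
        simp only [filterA, mem_filter, mem_product, mem_Icc]
        omega⟩
      invFun := fun p => ⟨((p.1.1 : ZMod n), (p.1.2 : ZMod n)), by
        have hp := p.2
        simp only [filterA, mem_filter, mem_product, mem_Icc] at hp
        refine (QS_char hm _).mpr ?_
        have v1 : ((p.1.1 : ℕ) : ZMod n).val = p.1.1 := ZMod.val_cast_of_lt (by omega)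
        have v2 : ((p.1.2 : ℕ) : ZMod n).val = p.1.2 := ZMod.val_cast_of_lt (by omega)
        dsimp only
        rw [v1, v2]
        omega⟩
      left_inv := fun s => Subtype.ext (Prod.ext
        (ZMod.natCast_rightInverse s.1.1) (ZMod.natCast_rightInverse s.1.2))
      right_inv := fun p => by
        have hp := p.2
        simp only [filterA, mem_filter, mem_product, mem_Icc] at hp
        apply Subtype.ext
        apply Prod.ext <;> dsimp only <;> exact ZMod.val_cast_of_lt (by omega) }
  rw [Nat.card_congr e, Nat.card_eq_fintype_card, Fintype.card_coe]

lemma card_QO {m : ℕ} [NeZero n] (hm : n = 2 * m + 1) :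
    Nat.card {s : ZMod n × ZMod n // QO n s} = (filterB n).card := by
  have e : {s : ZMod n × ZMod n // QO n s} ≃ {p : ℕ × ℕ // p ∈ filterB n} :=
    { toFun := fun s => ⟨(s.1.1.val, s.1.2.val), by
        have h := (QO_char hm s.1).mp s.2
        rw [Nat.odd_iff, Nat.odd_iff] at h
        have l1 : s.1.1.val < n := ZMod.val_lt s.1.1
        have l2 : s.1.2.val < n := ZMod.val_lt s.1.2
        simp only [filterB, mem_filter, mem_product, mem_range]
        omega⟩
      invFun := fun p => ⟨(((p.1.1 : ℕ) : ZMod n), ((p.1.2 : ℕ) : ZMod n)), by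
        have hp := p.2
        simp only [filterB, mem_filter, mem_product, mem_range] at hp
        refine (QO_char hm _).mpr ?_
        have v1 : ((p.1.1 : ℕ) : ZMod n).val = p.1.1 := ZMod.val_cast_of_lt (by omega)
        have v2 : ((p.1.2 : ℕ) : ZMod n).val = p.1.2 := ZMod.val_cast_of_lt (by omega)
        dsimp only
        rw [v1, v2, Nat.odd_iff, Nat.odd_iff]
        omega⟩
      left_inv := fun s => Subtype.ext (Prod.ext
        (ZMod.natCast_rightInverse s.1.1) (ZMod.natCast_rightInverse s.1.2))
      right_inv := fun p => by
        have hp := p.2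
        simp only [filterB, mem_filter, mem_product, mem_range] at hp
        apply Subtype.ext
        apply Prod.ext <;> dsimp only <;> exact ZMod.val_cast_of_lt (by omega) }
  rw [Nat.card_congr e, Nat.card_eq_fintype_card, Fintype.card_coe]

lemma cardA_eq (m : ℕ) : (filterA m).card = (sigT m).card := by
  refine Finset.card_bij' (fun p _ => ⟨m - p.1, p.1 + p.2 - m - 1⟩)
    (fun x _ => (m - x.1, x.1 + x.2 + 1)) ?_ ?_ ?_ ?_
  · rintro ⟨p1, p2⟩ hp
    simp only [filterA, mem_filter, mem_product, mem_Icc] at hp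
    simp only [sigT, mem_sigma, mem_range]
    omega
  · rintro ⟨a, b⟩ hx
    simp only [sigT, mem_sigma, mem_range] at hx
    simp only [filterA, mem_filter, mem_product, mem_Icc]
    omega
  · rintro ⟨p1, p2⟩ hp
    simp only [filterA, mem_filter, mem_product, mem_Icc] at hp
    simp only [Prod.mk.injEq]
    omega
  · rintro ⟨a, b⟩ hx
    simp only [sigT, mem_sigma, mem_range] at hx
    simp only [Sigma.mk.inj_iff, heq_eq_eq]
    omega

lemma cardB_eq {m : ℕ} (hm : n = 2 * m + 1) : (filterB n).card = (sigT m).card := by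
  refine Finset.card_bij' (fun p _ => ⟨p.1 / 2, p.2 / 2⟩)
    (fun x _ => (2 * x.1 + 1, 2 * x.2 + 1)) ?_ ?_ ?_ ?_
  · rintro ⟨p1, p2⟩ hp
    simp only [filterB, mem_filter, mem_product, mem_range] at hp
    simp only [sigT, mem_sigma, mem_range]
    omega
  · rintro ⟨a, b⟩ hx
    simp only [sigT, mem_sigma, mem_range] at hx
    simp only [filterB, mem_filter, mem_product, mem_range]
    omega
  · rintro ⟨p1, p2⟩ hp
    simp only [filterB, mem_filter, mem_product, mem_range] at hp
    simp only [Prod.mk.injEq]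
    omega
  · rintro ⟨a, b⟩ hx
    simp only [sigT, mem_sigma, mem_range] at hx
    simp only [Sigma.mk.inj_iff, heq_eq_eq]
    omega

lemma two_sigT (m : ℕ) : 2 * (sigT m).card = m * (m + 1) := by
  rw [sigT, card_sigma]
  simp only [card_range]
  have h1 : ∑ a ∈ range m, (m - a) = ∑ a ∈ range m, (a + 1) := by
    conv_lhs => rw [← Finset.sum_range_reflect (fun a => m - a) m]
    exact Finset.sum_congr rfl fun j hj => by
      rw [mem_range] at hj; omega
  rw [h1, Finset.sum_add_distrib, Finset.sum_const, card_range, smul_eq_mul, mul_one]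
  have h2 := Finset.sum_range_id_mul_two m
  cases m with
  | zero => simp
  | succ k =>
    have hk : (k + 1) * ((k + 1) - 1) = (k + 1) * k := by simp
    rw [hk] at h2
    nlinarith [h2]

end StmtAux

open StmtAux

/-- For odd `n ≥ 3`, the number of small tours equals the number of odd tours,
and both equal `(1/4)·C(n+1,3)`. -/
theorem stmt_5 (n : ℕ) (hn : 3 ≤ n) (hodd : Odd n) :
    Nat.card (SmallTours n) = Nat.card (OddTours n) ∧
    4 * Nat.card (SmallTours n) = (n + 1).choose 3 := by
  obtain ⟨m, hm⟩ := hodd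
  haveI : NeZero n := ⟨by omega⟩
  have hm2 : (n - 1) / 2 = m := by omega
  have hrotS : ∀ t : Trip n, isSmallTriple n t → isSmallTriple n (rotTriple t) := by
    rintro ⟨a, b, c⟩ ⟨h1, h2, h3, h4, h5, h6⟩
    exact ⟨h2, h3, h1, h5, h6, h4⟩
  have hrotO : ∀ t : Trip n, isOddTriple n t → isOddTriple n (rotTriple t) := by
    rintro ⟨a, b, c⟩ ⟨h1, h2, h3, h4, h5, h6⟩
    exact ⟨h2, h3, h1, h5, h6, h4⟩
  have h3S := card_triples (isSmallTriple n) hrotS fun t ht => ht.1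
  have h3O := card_triples (isOddTriple n) hrotO fun t ht => ht.1
  have hidS : Nat.card {T : Tour n // ∃ a, isSmallTriple n a ∧ Quot.mk _ a = T}
      = Nat.card (SmallTours n) := rfl
  have hidO : Nat.card {T : Tour n // ∃ a, isOddTriple n a ∧ Quot.mk _ a = T}
      = Nat.card (OddTours n) := rfl
  rw [hidS] at h3S
  rw [hidO] at h3O
  have eS : Nat.card {t : Trip n // isSmallTriple n t}
      = n * Nat.card {s : ZMod n × ZMod n // QS n m s} := by
    have hiff : ∀ t : Trip n, isSmallTriple n t ↔ QS n m (t.2.1 - t.1, t.2.2 - t.2.1) := by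
      intro t; rw [small_iff t, hm2]
    rw [Nat.card_congr (Equiv.subtypeEquivRight hiff),
      Nat.card_congr (stepEquiv (QS n m)), Nat.card_prod, Nat.card_zmod]
  have eO : Nat.card {t : Trip n // isOddTriple n t}
      = n * Nat.card {s : ZMod n × ZMod n // QO n s} := by
    rw [Nat.card_congr (Equiv.subtypeEquivRight (fun t => odd_iff' t)),
      Nat.card_congr (stepEquiv (QO n)), Nat.card_prod, Nat.card_zmod]
  have cS : Nat.card {s : ZMod n × ZMod n // QS n m s} = (sigT m).card := by
    rw [card_QS hm, cardA_eq]
  have cO : Nat.card {s : ZMod n × ZMod n // QO n s} = (sigT m).card := by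
    rw [card_QO hm, cardB_eq hm]
  have e1 : 3 * Nat.card (SmallTours n) = n * (sigT m).card := by
    rw [← h3S, eS, cS]
  have e2 : 3 * Nat.card (OddTours n) = n * (sigT m).card := by
    rw [← h3O, eO, cO]
  have h2T : 2 * (sigT m).card = m * (m + 1) := two_sigT m
  constructor
  · exact Nat.eq_of_mul_eq_mul_left (by norm_num) (e1.trans e2.symm)
  · have hc : (n + 1).choose 3 * 6 = (n + 1) * n * (n - 1) := by
      have h1 := Nat.add_one_mul_choose_eq n 2
      have h2 := Nat.add_one_mul_choose_eq (n - 1) 1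
      rw [Nat.choose_one_right] at h2
      have hs : n - 1 + 1 = n := by omega
      rw [hs] at h2
      norm_num at h1 h2
      calc (n + 1).choose 3 * 6 = ((n + 1).choose 3 * 3) * 2 := by ring
        _ = ((n + 1) * n.choose 2) * 2 := by rw [← h1]
        _ = (n + 1) * (n.choose 2 * 2) := by ring
        _ = (n + 1) * (n * (n - 1)) := by rw [← h2]
        _ = (n + 1) * n * (n - 1) := by ring
    have h6 : (4 * Nat.card (SmallTours n)) * 6 = (n + 1).choose 3 * 6 := by
      rw [hc]
      have hn1 : n - 1 = 2 * m := by omega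
      rw [hn1]
      calc (4 * Nat.card (SmallTours n)) * 6
          = 8 * (3 * Nat.card (SmallTours n)) := by ring
        _ = 8 * (n * (sigT m).card) := by rw [e1]
        _ = 2 * n * (2 * (2 * (sigT m).card)) := by ring
        _ = 2 * n * (2 * (m * (m + 1))) := by rw [h2T]
        _ = (n + 1) * n * (2 * m) := by rw [hm]; ring
    exact Nat.eq_of_mul_eq_mul_right (by norm_num) h6
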